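/- arXiv:2402.19189 — 2 statements merged into one kernel-verified Lean document; each statement's English description precedes it below -/
import Mathlib

section
/- Let g ⊆ V × V be an edge set of a finite directed graph on vertex set V, let S ⊆ V, let w ∈ V, and let e = ⟨u, v⟩ be an edge with u ∈ S. Then the reverse reachable set of w after adding e intersects S if and only if either the reverse reachable set of w in g already intersects S, or v ∈ RR(w, g); i.e., S ∩ RR(w, g ∪ {e}) ≠ ∅ ⇔ (S ∩ RR(w, g) ≠ ∅) ∨ (v ∈ RR(w, g)). -/
open scoped Classical

noncomputable section

/-- The set of nodes reachable from some node of `S` via edges of `g`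
(every node reaches itself). -/
def Reach {V : Type*} (S : Finset V) (g : Finset (V × V)) : Set V :=
  {x | ∃ s ∈ S, Relation.ReflTransGen (fun a b => (a, b) ∈ g) s x}

/-- The reverse reachable set of `w` in `g`: all nodes `x` such that `w ∈ Reach({x}, g)`. -/
def RR {V : Type*} (w : V) (g : Finset (V × V)) : Set V :=
  {x | w ∈ Reach {x} g}

lemma rr_mem_iff {V : Type*} (w : V) (g : Finset (V × V)) (x : V) :
    x ∈ RR w g ↔ Relation.ReflTransGen (fun a b => (a, b) ∈ g) x w := by
  simp [RR, Reach]

lemma split_path {V : Type*} [DecidableEq V] (g : Finset (V × V)) (u v : V) {x w : V}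
    (h : Relation.ReflTransGen (fun a b => (a, b) ∈ g ∪ {(u, v)}) x w) :
    Relation.ReflTransGen (fun a b => (a, b) ∈ g) x w ∨
      Relation.ReflTransGen (fun a b => (a, b) ∈ g) v w := by
  induction h using Relation.ReflTransGen.head_induction_on with
  | refl => exact Or.inl .refl
  | head hab _ ih =>
    rcases Finset.mem_union.1 hab with hg | he
    · rcases ih with ih | ih
      · exact Or.inl (Relation.ReflTransGen.head hg ih)
      · exact Or.inr ih
    · simp only [Finset.mem_singleton, Prod.mk.injEq] at he
      rcases ih with ih | ih
      · exact Or.inr (he.2 ▸ ih)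
      · exact Or.inr ih

/-- For `e = ⟨u,v⟩` with `u ∈ S`, the RR set of `w` after adding `e` intersects `S` iff
either `RR(w, g)` already intersects `S`, or `v ∈ RR(w, g)`. -/
theorem rr_update_condition {V : Type*} [Fintype V] [DecidableEq V]
    (g : Finset (V × V)) (S : Finset V) (w : V) (u v : V) (hu : u ∈ S) :
    ((S : Set V) ∩ RR w (g ∪ {(u, v)})).Nonempty ↔
      ((S : Set V) ∩ RR w g).Nonempty ∨ v ∈ RR w g := by
  constructor
  · rintro ⟨x, hxS, hx⟩
    rcases split_path g u v ((rr_mem_iff _ _ _).1 hx) with h | h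
    · exact Or.inl ⟨x, hxS, (rr_mem_iff _ _ _).2 h⟩
    · exact Or.inr ((rr_mem_iff _ _ _).2 h)
  · rintro (⟨x, hxS, hx⟩ | hv)
    · refine ⟨x, hxS, (rr_mem_iff _ _ _).2 ?_⟩
      exact Relation.ReflTransGen.mono (fun a b h => Finset.mem_union_left _ h) _ _ ((rr_mem_iff _ _ _).1 hx)
    · refine ⟨u, hu, (rr_mem_iff _ _ _).2 ?_⟩
      refine Relation.ReflTransGen.head (b := v) (Finset.mem_union_right _ (by simp)) ?_
      exact Relation.ReflTransGen.mono (fun a b h => Finset.mem_union_left _ h) _ _ ((rr_mem_iff _ _ _).1 hv)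
end
end

section
/- Let g ⊆ V × V be an edge set of a finite directed graph on vertex set V, let w ∈ V, and let e = ⟨u, v⟩ be an edge. If v ∈ RR(w, g), then RR(w, g ∪ {e}) = RR(w, g) ∪ RR(u, g); otherwise RR(w, g ∪ {e}) = RR(w, g). -/
open scoped Classical

noncomputable section

private lemma aux_split {V : Type*} [DecidableEq V] (g : Finset (V × V)) (u v : V)
    {a b : V}
    (h : Relation.ReflTransGen (fun p q => (p, q) ∈ g ∪ {(u, v)}) a b) :
    Relation.ReflTransGen (fun p q => (p, q) ∈ g) a b ∨
      (Relation.ReflTransGen (fun p q => (p, q) ∈ g) a u ∧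
       Relation.ReflTransGen (fun p q => (p, q) ∈ g) v b) := by
  induction h using Relation.ReflTransGen.head_induction_on with
  | refl => exact Or.inl .refl
  | head hac _ ih =>
    rename_i x c _
    rcases Finset.mem_union.mp hac with hg | he
    · rcases ih with h1 | ⟨h1, h2⟩
      · exact Or.inl (Relation.ReflTransGen.head hg h1)
      · exact Or.inr ⟨Relation.ReflTransGen.head hg h1, h2⟩
    · obtain ⟨hx, hc⟩ := Prod.mk.injEq .. ▸ Finset.mem_singleton.mp he
      subst hx; subst hc
      rcases ih with h1 | ⟨_, h2⟩
      · exact Or.inr ⟨.refl, h1⟩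
      · exact Or.inr ⟨.refl, h2⟩

private lemma aux_mono {V : Type*} [DecidableEq V] (g : Finset (V × V)) (u v : V)
    {a b : V}
    (h : Relation.ReflTransGen (fun p q => (p, q) ∈ g) a b) :
    Relation.ReflTransGen (fun p q => (p, q) ∈ g ∪ {(u, v)}) a b :=
  Relation.ReflTransGen.mono (fun _ _ hp => Finset.mem_union_left _ hp) _ _ h

/-- Adding the edge `e = ⟨u,v⟩`: if `v ∈ RR(w, g)` then
`RR(w, g ∪ {e}) = RR(w, g) ∪ RR(u, g)`; otherwise `RR(w, g ∪ {e}) = RR(w, g)`. -/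
theorem rr_insert_edge {V : Type*} [Fintype V] [DecidableEq V]
    (g : Finset (V × V)) (w : V) (u v : V) :
    (v ∈ RR w g → RR w (g ∪ {(u, v)}) = RR w g ∪ RR u g) ∧
    (v ∉ RR w g → RR w (g ∪ {(u, v)}) = RR w g) := by
  simp only [RR, Reach, Set.mem_setOf_eq, Finset.mem_singleton, exists_eq_left]
  constructor
  · intro hv
    ext x
    simp only [Set.mem_union, Set.mem_setOf_eq, Finset.mem_singleton, exists_eq_left]
    constructor
    · intro h
      rcases aux_split g u v h with h1 | ⟨h1, _⟩
      · exact Or.inl h1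
      · exact Or.inr h1
    · rintro (h | h)
      · exact aux_mono g u v h
      · exact (aux_mono g u v h).trans
          (Relation.ReflTransGen.head (Finset.mem_union_right _ (Finset.mem_singleton_self _))
            (aux_mono g u v hv))
  · intro hv
    ext x
    simp only [Set.mem_setOf_eq, Finset.mem_singleton, exists_eq_left]
    constructor
    · intro h
      rcases aux_split g u v h with h1 | ⟨_, h2⟩
      · exact h1
      · exact absurd h2 hv
    · exact aux_mono g u v
end
end
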